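/- Denoting by κ_P and c_P the kurtosis and uniform kurtosis of a probability measure P on the real line (with positive variance and finite fourth moment), one has sup_P (c_P − κ_P) = 2, where the supremum is taken over all such probability measures on ℝ. In particular, for the Bernoulli distribution with parameter p ∈ (0,1), κ = p⁻¹ − 2 + p/(1−p) and c − κ ≥ 2 − p/(1−p), so the value 2 is approached as p → 0, while c_P − κ_P ≤ 2 always holds. -/

import Mathlib

open MeasureTheory ProbabilityTheory

/-- The mean of a probability measure on `ℝ`. -/
noncomputable def meanOf (μ : Measure ℝ) : ℝ := ∫ y, y ∂μ

/-- The variance of a probability measure on `ℝ`. -/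
noncomputable def varOf (μ : Measure ℝ) : ℝ := ∫ y, (y - meanOf μ) ^ 2 ∂μ

/-- The (centered) kurtosis `κ_P = E[(Y - m)⁴]/v²` of a probability measure on `ℝ`. -/
noncomputable def kurtOf (μ : Measure ℝ) : ℝ :=
  (∫ y, (y - meanOf μ) ^ 4 ∂μ) / (varOf μ) ^ 2

/-- The uniform kurtosis `c_P = sup_θ E[(Y - θ)⁴]/(E[(Y - θ)²])²` of a probability measure
on `ℝ`. -/
noncomputable def ukurtOf (μ : Measure ℝ) : ℝ :=
  ⨆ θ : ℝ, (∫ y, (y - θ) ^ 4 ∂μ) / (∫ y, (y - θ) ^ 2 ∂μ) ^ 2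

/-- The Bernoulli distribution with parameter `p`, as a measure on `ℝ`
(mass `p` at `1` and mass `1 - p` at `0`). -/
noncomputable def bernMeasure (p : ℝ) : Measure ℝ :=
  ENNReal.ofReal p • Measure.dirac (1 : ℝ) + ENNReal.ofReal (1 - p) • Measure.dirac (0 : ℝ)

/- ### Auxiliary lemmas -/

lemma myIntegrablePow {μ : Measure ℝ} [IsProbabilityMeasure μ]
    (h4 : Integrable (fun y => y ^ 4) μ) (k : ℕ) (hk : k ≤ 4) :
    Integrable (fun y : ℝ => y ^ k) μ := by
  refine ((integrable_const (1:ℝ)).add h4).mono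
    ((measurable_id.pow_const k).aestronglyMeasurable) ?_
  filter_upwards with y
  simp only [Pi.add_apply]
  have h1 : (0:ℝ) ≤ 1 + y ^ 4 := by positivity
  rw [Real.norm_eq_abs, Real.norm_eq_abs, abs_of_nonneg h1, abs_pow]
  rcases le_total (|y|) 1 with h | h
  · have h2 : |y| ^ k ≤ 1 := pow_le_one₀ (abs_nonneg y) h
    nlinarith [pow_nonneg (abs_nonneg y) 4, sq_nonneg (y^2)]
  · have h2 : |y| ^ k ≤ |y| ^ 4 := pow_le_pow_right₀ h hk
    have h3 : |y| ^ 4 = y ^ 4 := by rw [← abs_pow]; exact abs_of_nonneg (by positivity)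
    linarith

lemma myCS {ν : Measure ℝ} {g h : ℝ → ℝ}
    (hg2 : Integrable (fun y => g y ^ 2) ν) (hh2 : Integrable (fun y => h y ^ 2) ν)
    (hgh : Integrable (fun y => g y * h y) ν) :
    (∫ y, g y * h y ∂ν) ^ 2 ≤ (∫ y, g y ^ 2 ∂ν) * (∫ y, h y ^ 2 ∂ν) := by
  set A := ∫ y, g y ^ 2 ∂ν with hA
  set B := ∫ y, g y * h y ∂ν with hB
  set C := ∫ y, h y ^ 2 ∂ν with hC
  have hA0 : 0 ≤ A := integral_nonneg fun y => sq_nonneg _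
  have hC0 : 0 ≤ C := integral_nonneg fun y => sq_nonneg _
  rcases eq_or_lt_of_le hC0 with hzero | hpos
  · have hae : (fun y => h y ^ 2) =ᵐ[ν] 0 := by
      rw [← integral_eq_zero_iff_of_nonneg (fun y => sq_nonneg _) hh2]
      exact hzero.symm
    have hB0 : B = 0 := by
      rw [hB]
      have : (fun y => g y * h y) =ᵐ[ν] 0 := ?_
      · rw [integral_congr_ae this]; simp
      filter_upwards [hae] with y hy
      have : h y = 0 := by
        have := hy
        simp only [Pi.zero_apply] at this
        exact pow_eq_zero_iff (n := 2) (by norm_num) |>.mp this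
      simp [this]
    rw [hB0, ← hzero]; simp
  · have e : (fun y => (C * g y - B * h y) ^ 2)
        = fun y => C ^ 2 * (g y ^ 2) + (-(2 * C * B)) * (g y * h y) + B ^ 2 * (h y ^ 2) :=
      funext fun y => by ring
    have h12 : Integrable (fun y => C ^ 2 * (g y ^ 2) + (-(2 * C * B)) * (g y * h y)) ν :=
      (hg2.const_mul _).add (hgh.const_mul _)
    have expand : ∫ y, (C * g y - B * h y) ^ 2 ∂ν
        = C ^ 2 * A - 2 * C * B * B + B ^ 2 * C := by
      rw [e, integral_add h12 (hh2.const_mul _),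
        integral_add (hg2.const_mul _) (hgh.const_mul _),
        integral_const_mul, integral_const_mul, integral_const_mul]
      ring
    have key := integral_nonneg (f := fun y => (C * g y - B * h y) ^ 2) (fun y => sq_nonneg (C * g y - B * h y)) (μ := ν)
    rw [expand] at key
    nlinarith [key, hpos]

lemma integrable_poly {μ : Measure ℝ} [IsProbabilityMeasure μ]
    (h4 : Integrable (fun y => y ^ 4) μ) (a b c d e : ℝ) :
    Integrable (fun y : ℝ => a * y ^ 4 + b * y ^ 3 + c * y ^ 2 + d * y + e) μ := by
  have h3 := myIntegrablePow h4 3 (by norm_num)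
  have h2 := myIntegrablePow h4 2 (by norm_num)
  have h1 : Integrable (fun y : ℝ => y) μ := by
    simpa using myIntegrablePow h4 1 (by norm_num)
  exact ((((h4.const_mul a).add (h3.const_mul b)).add (h2.const_mul c)).add
    (h1.const_mul d)).add (integrable_const e)

lemma integral_poly {μ : Measure ℝ} [IsProbabilityMeasure μ]
    (h4 : Integrable (fun y => y ^ 4) μ) (a b c d e : ℝ) :
    ∫ y, (a * y ^ 4 + b * y ^ 3 + c * y ^ 2 + d * y + e) ∂μ
      = a * (∫ y, y ^ 4 ∂μ) + b * (∫ y, y ^ 3 ∂μ) + c * (∫ y, y ^ 2 ∂μ)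
        + d * (∫ y, y ∂μ) + e := by
  have h3 := myIntegrablePow h4 3 (by norm_num)
  have h2 := myIntegrablePow h4 2 (by norm_num)
  have h1 : Integrable (fun y : ℝ => y) μ := by
    simpa using myIntegrablePow h4 1 (by norm_num)
  have i1 : Integrable (fun y : ℝ => a * y ^ 4) μ := h4.const_mul a
  have i2 : Integrable (fun y : ℝ => a * y ^ 4 + b * y ^ 3) μ := i1.add (h3.const_mul b)
  have i3 : Integrable (fun y : ℝ => a * y ^ 4 + b * y ^ 3 + c * y ^ 2) μ :=
    i2.add (h2.const_mul c)
  have i4 : Integrable (fun y : ℝ => a * y ^ 4 + b * y ^ 3 + c * y ^ 2 + d * y) μ :=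
    i3.add (h1.const_mul d)
  rw [integral_add i4 (integrable_const e), integral_add i3 (h1.const_mul d),
    integral_add i2 (h2.const_mul c), integral_add i1 (h3.const_mul b),
    integral_const_mul, integral_const_mul, integral_const_mul, integral_const_mul,
    integral_const]
  simp [measure_univ]

/-- The purely algebraic core inequality. -/
lemma alg_core (v μ3 μ4 s : ℝ) (hv : 0 < v) (c1 : v ^ 2 ≤ μ4)
    (c2 : μ3 ^ 2 ≤ v * (μ4 - v ^ 2)) :
    (μ4 + 4 * μ3 * s + 6 * v * s ^ 2 + s ^ 4) / (v + s ^ 2) ^ 2 ≤ μ4 / v ^ 2 + 2 := by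
  have hR : μ4 / v ^ 2 + 2 = (μ4 + 2 * v ^ 2) / v ^ 2 := by field_simp
  rw [hR, div_le_div_iff₀ (by positivity) (by positivity)]
  nlinarith [sq_nonneg (μ3 * s - v ^ 2), mul_le_mul_of_nonneg_left c2 (sq_nonneg s),
    mul_nonneg (mul_nonneg (sq_nonneg s) (sq_nonneg s)) (sub_nonneg.2 c1),
    mul_nonneg (mul_nonneg (sq_nonneg s) (sq_nonneg s)) (sq_nonneg v)]

/-- Key bound: for every `θ`, the ratio is at most `kurtOf μ + 2`. -/
lemma ratio_le {μ : Measure ℝ} [IsProbabilityMeasure μ]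
    (h4 : Integrable (fun y => y ^ 4) μ) (hv : 0 < varOf μ) (θ : ℝ) :
    (∫ y, (y - θ) ^ 4 ∂μ) / (∫ y, (y - θ) ^ 2 ∂μ) ^ 2 ≤ kurtOf μ + 2 := by
  unfold kurtOf varOf meanOf
  unfold varOf meanOf at hv
  have E2 : ∀ t : ℝ, ∫ y, (y - t) ^ 2 ∂μ
      = 1 * (∫ y, y ^ 2 ∂μ) + (-(2*t)) * (∫ y, y ∂μ) + t ^ 2 := by
    intro t
    have e : (fun y : ℝ => (y - t) ^ 2)
        = fun y => 0 * y ^ 4 + 0 * y ^ 3 + 1 * y ^ 2 + (-(2*t)) * y + t ^ 2 :=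
      funext fun y => by ring
    rw [e, integral_poly h4]
    all_goals ring
  have E3 : ∀ t : ℝ, ∫ y, (y - t) ^ 3 ∂μ
      = 1 * (∫ y, y ^ 3 ∂μ) + (-(3*t)) * (∫ y, y ^ 2 ∂μ)
        + (3*t^2) * (∫ y, y ∂μ) + (-(t^3)) := by
    intro t
    have e : (fun y : ℝ => (y - t) ^ 3)
        = fun y => 0 * y ^ 4 + 1 * y ^ 3 + (-(3*t)) * y ^ 2 + (3*t^2) * y + (-(t^3)) :=
      funext fun y => by ring
    rw [e, integral_poly h4]
    all_goals ring
  have E4 : ∀ t : ℝ, ∫ y, (y - t) ^ 4 ∂μ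
      = 1 * (∫ y, y ^ 4 ∂μ) + (-(4*t)) * (∫ y, y ^ 3 ∂μ) + (6*t^2) * (∫ y, y ^ 2 ∂μ)
        + (-(4*t^3)) * (∫ y, y ∂μ) + t ^ 4 := by
    intro t
    have e : (fun y : ℝ => (y - t) ^ 4)
        = fun y => 1 * y ^ 4 + (-(4*t)) * y ^ 3 + (6*t^2) * y ^ 2 + (-(4*t^3)) * y + t ^ 4 :=
      funext fun y => by ring
    rw [e, integral_poly h4]
    all_goals ring
  set M : ℝ := ∫ y, y ∂μ with hM
  -- Cauchy–Schwarz 1 : v² ≤ μ₄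
  have cs1 : (∫ y, (y - M) ^ 2 ∂μ) ^ 2 ≤ ∫ y, (y - M) ^ 4 ∂μ := by
    have ia : Integrable (fun y => ((y - M) ^ 2) ^ 2) μ := by
      have e : (fun y : ℝ => ((y - M) ^ 2) ^ 2)
          = fun y => 1 * y ^ 4 + (-(4*M)) * y ^ 3 + (6*M^2) * y ^ 2 + (-(4*M^3)) * y + M ^ 4 :=
        funext fun y => by ring
      rw [e]; exact integrable_poly h4 _ _ _ _ _
    have ic : Integrable (fun y => (y - M) ^ 2 * 1) μ := by
      have e : (fun y : ℝ => (y - M) ^ 2 * 1)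
          = fun y => 0 * y ^ 4 + 0 * y ^ 3 + 1 * y ^ 2 + (-(2*M)) * y + M ^ 2 :=
        funext fun y => by ring
      rw [e]; exact integrable_poly h4 _ _ _ _ _
    have key : (∫ y, (y - M) ^ 2 * 1 ∂μ) ^ 2
        ≤ (∫ y, ((y - M) ^ 2) ^ 2 ∂μ) * (∫ y, (1:ℝ) ^ 2 ∂μ) :=
      myCS ia (integrable_const _) ic
    have e1 : (fun y : ℝ => (y - M) ^ 2 * 1) = fun y => (y - M) ^ 2 :=
      funext fun y => by ring
    have e2 : (fun y : ℝ => ((y - M) ^ 2) ^ 2) = fun y => (y - M) ^ 4 :=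
      funext fun y => by ring
    rw [e1, e2] at key
    have e3 : ∫ y, (1:ℝ) ^ 2 ∂μ = 1 := by simp
    rw [e3, mul_one] at key
    exact key
  -- Cauchy–Schwarz 2 : μ₃² ≤ v (μ₄ - v²)
  set v : ℝ := ∫ y, (y - M) ^ 2 ∂μ with hv2
  have cs2 : (∫ y, (y - M) ^ 3 ∂μ) ^ 2 ≤ v * ((∫ y, (y - M) ^ 4 ∂μ) - v ^ 2) := by
    have ia : Integrable (fun y => (y - M) ^ 2) μ := by
      have e : (fun y : ℝ => (y - M) ^ 2)
          = fun y => 0 * y ^ 4 + 0 * y ^ 3 + 1 * y ^ 2 + (-(2*M)) * y + M ^ 2 :=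
        funext fun y => by ring
      rw [e]; exact integrable_poly h4 _ _ _ _ _
    have ib : Integrable (fun y => ((y - M) ^ 2 - v) ^ 2) μ := by
      have e : (fun y : ℝ => ((y - M) ^ 2 - v) ^ 2)
          = fun y => 1 * y ^ 4 + (-(4*M)) * y ^ 3 + (6*M^2 - 2*v) * y ^ 2
            + (-(4*M^3) + 4*M*v) * y + (M^4 - 2*M^2*v + v^2) :=
        funext fun y => by ring
      rw [e]; exact integrable_poly h4 _ _ _ _ _
    have ic : Integrable (fun y => (y - M) * ((y - M) ^ 2 - v)) μ := by
      have e : (fun y : ℝ => (y - M) * ((y - M) ^ 2 - v))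
          = fun y => 0 * y ^ 4 + 1 * y ^ 3 + (-(3*M)) * y ^ 2 + (3*M^2 - v) * y
            + (-(M^3) + M*v) :=
        funext fun y => by ring
      rw [e]; exact integrable_poly h4 _ _ _ _ _
    have key : (∫ y, (y - M) * ((y - M) ^ 2 - v) ∂μ) ^ 2
        ≤ (∫ y, (y - M) ^ 2 ∂μ) * (∫ y, ((y - M) ^ 2 - v) ^ 2 ∂μ) :=
      myCS ia ib ic
    have hB : ∫ y, (y - M) * ((y - M) ^ 2 - v) ∂μ = ∫ y, (y - M) ^ 3 ∂μ := by
      have e : (fun y : ℝ => (y - M) * ((y - M) ^ 2 - v))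
          = fun y => 0 * y ^ 4 + 1 * y ^ 3 + (-(3*M)) * y ^ 2 + (3*M^2 - v) * y
            + (-(M^3) + M*v) :=
        funext fun y => by ring
      rw [e, integral_poly h4, E3 M, hv2, E2 M]; ring
    have hC : ∫ y, ((y - M) ^ 2 - v) ^ 2 ∂μ = (∫ y, (y - M) ^ 4 ∂μ) - v ^ 2 := by
      have e : (fun y : ℝ => ((y - M) ^ 2 - v) ^ 2)
          = fun y => 1 * y ^ 4 + (-(4*M)) * y ^ 3 + (6*M^2 - 2*v) * y ^ 2
            + (-(4*M^3) + 4*M*v) * y + (M^4 - 2*M^2*v + v^2) :=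
        funext fun y => by ring
      rw [e, integral_poly h4, E4 M, hv2, E2 M]; ring
    rw [hB, hC] at key
    exact key
  have g2 : ∫ y, (y - θ) ^ 2 ∂μ = v + (M - θ) ^ 2 := by
    rw [E2 θ, hv2, E2 M]; ring
  have g4 : ∫ y, (y - θ) ^ 4 ∂μ
      = (∫ y, (y - M) ^ 4 ∂μ) + 4 * (∫ y, (y - M) ^ 3 ∂μ) * (M - θ)
        + 6 * v * (M - θ) ^ 2 + (M - θ) ^ 4 := by
    rw [E4 θ, E4 M, E3 M, hv2, E2 M]; ring
  rw [g2, g4]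
  have := alg_core v (∫ y, (y - M) ^ 3 ∂μ) (∫ y, (y - M) ^ 4 ∂μ) (M - θ) hv cs1 cs2
  linarith [this]

/- ### Bernoulli computations -/

lemma bern_prob {p : ℝ} (hp0 : 0 < p) (hp1 : p < 1) :
    IsProbabilityMeasure (bernMeasure p) := by
  constructor
  simp only [bernMeasure, Measure.coe_add, Pi.add_apply, Measure.smul_apply,
    smul_eq_mul, measure_univ, mul_one]
  rw [← ENNReal.ofReal_add hp0.le (by linarith)]
  norm_num

lemma bern_integrable {p : ℝ} {f : ℝ → ℝ} (hf : Measurable f) :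
    Integrable f (bernMeasure p) := by
  have hd : ∀ a : ℝ, Integrable f (Measure.dirac a) := fun a =>
    ⟨hf.aestronglyMeasurable, by simp [HasFiniteIntegral, lintegral_dirac]⟩
  unfold bernMeasure
  exact ((hd 1).smul_measure ENNReal.ofReal_ne_top).add_measure
    ((hd 0).smul_measure ENNReal.ofReal_ne_top)

lemma bern_integral {p : ℝ} (hp0 : 0 ≤ p) (hp1 : p ≤ 1) {f : ℝ → ℝ} (hf : Measurable f) :
    ∫ y, f y ∂(bernMeasure p) = p * f 1 + (1 - p) * f 0 := by
  have hd : ∀ a : ℝ, Integrable f (Measure.dirac a) := fun a =>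
    ⟨hf.aestronglyMeasurable, by simp [HasFiniteIntegral, lintegral_dirac]⟩
  unfold bernMeasure
  rw [integral_add_measure ((hd 1).smul_measure ENNReal.ofReal_ne_top)
      ((hd 0).smul_measure ENNReal.ofReal_ne_top),
    integral_smul_measure, integral_smul_measure, integral_dirac, integral_dirac,
    ENNReal.toReal_ofReal hp0, ENNReal.toReal_ofReal (by linarith), smul_eq_mul, smul_eq_mul]

lemma bern_facts {p : ℝ} (hp0 : 0 < p) (hp1 : p < 1) :
    Integrable (fun y => y ^ 4) (bernMeasure p) ∧ 0 < varOf (bernMeasure p) ∧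
    kurtOf (bernMeasure p) = p⁻¹ - 2 + p / (1 - p) ∧
    2 - p / (1 - p) ≤ ukurtOf (bernMeasure p) - kurtOf (bernMeasure p) := by
  haveI := bern_prob hp0 hp1
  have h4 : Integrable (fun y : ℝ => y ^ 4) (bernMeasure p) :=
    bern_integrable (measurable_id.pow_const 4)
  have hmean : meanOf (bernMeasure p) = p := by
    unfold meanOf
    rw [bern_integral hp0.le hp1.le (f := fun y => y) (by fun_prop)]; ring
  have hvar : varOf (bernMeasure p) = p * (1 - p) := by
    unfold varOf
    rw [hmean, bern_integral hp0.le hp1.le (f := fun y => (y - p) ^ 2) (by fun_prop)]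
    ring
  have hvpos : 0 < varOf (bernMeasure p) := by
    rw [hvar]; exact mul_pos hp0 (by linarith)
  have hμ4 : ∫ y, (y - meanOf (bernMeasure p)) ^ 4 ∂(bernMeasure p)
      = p * (1 - p) ^ 4 + (1 - p) * p ^ 4 := by
    rw [hmean, bern_integral hp0.le hp1.le (f := fun y => (y - p) ^ 4) (by fun_prop)]
    ring
  have hp0' : p ≠ 0 := hp0.ne'
  have hp1' : (1 : ℝ) - p ≠ 0 := by linarith
  have hkurt : kurtOf (bernMeasure p) = p⁻¹ - 2 + p / (1 - p) := by
    unfold kurtOf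
    rw [hμ4, hvar]
    field_simp
    ring
  have hub : BddAbove (Set.range fun θ : ℝ =>
      (∫ y, (y - θ) ^ 4 ∂(bernMeasure p)) / (∫ y, (y - θ) ^ 2 ∂(bernMeasure p)) ^ 2) := by
    refine ⟨kurtOf (bernMeasure p) + 2, ?_⟩
    rintro x ⟨θ, rfl⟩
    exact ratio_le h4 hvpos θ
  have h0 : (∫ y, (y - 0) ^ 4 ∂(bernMeasure p)) / (∫ y, (y - 0) ^ 2 ∂(bernMeasure p)) ^ 2
      = p⁻¹ := by
    rw [bern_integral hp0.le hp1.le (f := fun y => (y - 0) ^ 4) (by fun_prop),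
      bern_integral hp0.le hp1.le (f := fun y => (y - 0) ^ 2) (by fun_prop)]
    norm_num
    rw [sq]
    field_simp
  have hle : p⁻¹ ≤ ukurtOf (bernMeasure p) := by
    unfold ukurtOf
    refine le_trans ?_ (le_ciSup hub 0)
    exact le_of_eq h0.symm
  refine ⟨h4, hvpos, hkurt, ?_⟩
  rw [hkurt]
  linarith

theorem sup_uniform_kurtosis_sub_kurtosis_eq_two :
    IsLUB {d : ℝ | ∃ μ : Measure ℝ, IsProbabilityMeasure μ ∧
        Integrable (fun y => y ^ 4) μ ∧ 0 < varOf μ ∧ d = ukurtOf μ - kurtOf μ} 2 ∧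
    ∀ p : ℝ, 0 < p → p < 1 →
      kurtOf (bernMeasure p) = p⁻¹ - 2 + p / (1 - p) ∧
      2 - p / (1 - p) ≤ ukurtOf (bernMeasure p) - kurtOf (bernMeasure p) := by
  constructor
  · constructor
    · rintro d ⟨μ, hP, h4, hv, rfl⟩
      haveI := hP
      have hup : ukurtOf μ ≤ kurtOf μ + 2 := by
        unfold ukurtOf
        exact ciSup_le fun θ => ratio_le h4 hv θ
      linarith
    · intro b hb
      refine le_of_forall_sub_le fun ε hε => ?_
      set p := min (ε/2) (1/2) with hpdef
      have hp0 : 0 < p := lt_min (by linarith) (by norm_num)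
      have hp1 : p < 1 := lt_of_le_of_lt (min_le_right _ _) (by norm_num)
      obtain ⟨h4, hv, hk, hge⟩ := bern_facts hp0 hp1
      have hmem : ukurtOf (bernMeasure p) - kurtOf (bernMeasure p) ∈
          {d : ℝ | ∃ μ : Measure ℝ, IsProbabilityMeasure μ ∧
            Integrable (fun y => y ^ 4) μ ∧ 0 < varOf μ ∧ d = ukurtOf μ - kurtOf μ} :=
        ⟨bernMeasure p, bern_prob hp0 hp1, h4, hv, rfl⟩
      have hbb := hb hmem
      have hpe : p / (1 - p) ≤ ε := by
        have h12 : p ≤ 1/2 := min_le_right _ _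
        have hε2 : p ≤ ε/2 := min_le_left _ _
        rw [div_le_iff₀ (by linarith : (0:ℝ) < 1 - p)]
        nlinarith [mul_nonneg hε.le (by linarith : (0:ℝ) ≤ 1/2 - p)]
      linarith
  · intro p hp0 hp1
    obtain ⟨_, _, hk, hge⟩ := bern_facts hp0 hp1
    exact ⟨hk, hge⟩
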